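/- Let f₁, f₂ : ℝ^d → ℝ be differentiable with curvatures in [μ₁, L₁] and [μ₂, L₂] respectively, where μ₂ ≥ μ₁ ≥ 0, 0 < L₁ ≤ μ₂ < L₂, μ₁ < L₁. Let x₀, x₁, x₂ satisfy ∇f₁(x₁) = ∇f₂(x₀) and ∇f₁(x₂) = ∇f₂(x₁). Then F(x₁) − F(x₂) ≥ (μ₂²(L₁+μ₂)/L₁²)·(1/2)‖x₀ − x₁‖², where F = f₁ − f₂. -/

import Mathlib

open Set InnerProductSpace
open scoped RealInnerProductSpace

section aux

variable {E : Type*} [NormedAddCommGroup E] [InnerProductSpace ℝ E] [CompleteSpace E]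

lemma convex_grad_le (g : E → ℝ) (hc : ConvexOn ℝ univ g) {x : E} (G : E)
    (hG : HasGradientAt g G x) (y : E) : g x + ⟪G, y - x⟫ ≤ g y := by
  have hm : HasDerivAt (fun t : ℝ => x + t • (y - x)) (y - x) 0 := by
    simpa using ((hasDerivAt_id (0:ℝ)).smul_const (y - x)).const_add x
  have hG' : HasFDerivAt g (toDual ℝ E G) ((fun t : ℝ => x + t • (y - x)) 0) := by
    simpa using hG.hasFDerivAt
  have hφ : HasDerivAt (fun t : ℝ => g (x + t • (y - x))) (⟪G, y - x⟫) 0 := by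
    have h := hG'.comp_hasDerivAt 0 hm
    simp only [Function.comp_def, InnerProductSpace.toDual_apply_apply] at h
    exact h
  have hconv : ConvexOn ℝ univ (fun t : ℝ => g (x + t • (y - x))) := by
    have h := hc.comp_affineMap (AffineMap.lineMap x y)
    rw [preimage_univ] at h
    have he : (g ∘ (AffineMap.lineMap x y) : ℝ → ℝ) = fun t : ℝ => g (x + t • (y - x)) := by
      funext t
      simp only [Function.comp_apply, AffineMap.lineMap_apply_module]
      congr 1
      module
    rwa [he] at h
  have hs := hconv.le_slope_of_hasDerivAt (mem_univ (0:ℝ)) (mem_univ (1:ℝ)) one_pos hφ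
  have hsl : slope (fun t : ℝ => g (x + t • (y - x))) 0 1 = g y - g x := by
    simp [slope_def_field]
  rw [hsl] at hs
  linarith

lemma hasGradientAt_half_sq (c : ℝ) (x : E) :
    HasGradientAt (fun y : E => c / 2 * ‖y‖ ^ 2) (c • x) x := by
  have h1 := ((hasFDerivAt_id x).inner ℝ (hasFDerivAt_id x)).const_mul (c / 2)
  simp only [id_eq] at h1
  have he : (fun y : E => c / 2 * ⟪y, y⟫) = fun y : E => c / 2 * ‖y‖ ^ 2 := by
    funext y; rw [real_inner_self_eq_norm_sq]
  rw [he] at h1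
  have : HasFDerivAt (fun y : E => c / 2 * ‖y‖ ^ 2) (toDual ℝ E (c • x)) x := by
    refine h1.congr_fderiv ?_
    ext v
    simp [fderivInnerCLM, real_inner_comm, inner_smul_left]
    ring
  exact this
end aux

section aux2
variable {E : Type*} [NormedAddCommGroup E] [InnerProductSpace ℝ E] [CompleteSpace E]

lemma lower_bound (f : E → ℝ) (μ : ℝ) (hf : Differentiable ℝ f)
    (hc : ConvexOn ℝ univ (fun x => f x - μ / 2 * ‖x‖ ^ 2)) (x y : E) :
    f x + ⟪gradient f x, y - x⟫ + μ / 2 * ‖y - x‖ ^ 2 ≤ f y := by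
  have hg : HasGradientAt (fun z => f z - μ / 2 * ‖z‖ ^ 2) (gradient f x - μ • x) x := by
    have h1 := (hf x).hasGradientAt.hasFDerivAt
    have h2 := (hasGradientAt_half_sq μ x).hasFDerivAt
    have h3 := h1.sub h2
    rw [← map_sub] at h3
    exact h3
  have key := convex_grad_le _ hc _ hg y
  have hexp : ⟪gradient f x - μ • x, y - x⟫
      = ⟪gradient f x, y - x⟫ - μ * (⟪x, y⟫ - ‖x‖ ^ 2) := by
    simp [inner_sub_left, inner_sub_right, real_inner_smul_left, real_inner_self_eq_norm_sq]
    ring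
  have hns : ‖y - x‖ ^ 2 = ‖y‖ ^ 2 - 2 * ⟪x, y⟫ + ‖x‖ ^ 2 := by
    rw [norm_sub_sq_real, real_inner_comm]
  rw [hexp] at key
  rw [hns]
  linarith [key]

lemma upper_bound (f : E → ℝ) (L : ℝ) (hf : Differentiable ℝ f)
    (hc : ConvexOn ℝ univ (fun x => L / 2 * ‖x‖ ^ 2 - f x)) (x y : E) :
    f y ≤ f x + ⟪gradient f x, y - x⟫ + L / 2 * ‖y - x‖ ^ 2 := by
  have hg : HasGradientAt (fun z => L / 2 * ‖z‖ ^ 2 - f z) (L • x - gradient f x) x := by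
    have h1 := (hf x).hasGradientAt.hasFDerivAt
    have h2 := (hasGradientAt_half_sq L x).hasFDerivAt
    have h3 := h2.sub h1
    rw [← map_sub] at h3
    exact h3
  have key := convex_grad_le _ hc _ hg y
  have hexp : ⟪L • x - gradient f x, y - x⟫
      = L * (⟪x, y⟫ - ‖x‖ ^ 2) - ⟪gradient f x, y - x⟫ := by
    simp [inner_sub_left, inner_sub_right, real_inner_smul_left, real_inner_self_eq_norm_sq]
    ring
  have hns : ‖y - x‖ ^ 2 = ‖y‖ ^ 2 - 2 * ⟪x, y⟫ + ‖x‖ ^ 2 := by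
    rw [norm_sub_sq_real, real_inner_comm]
  rw [hns]
  rw [hexp] at key
  linarith [key]

lemma interp (f : E → ℝ) (L : ℝ) (hL : 0 < L) (hf : Differentiable ℝ f)
    (hlow : ∀ a b : E, f a + ⟪gradient f a, b - a⟫ ≤ f b)
    (hcL : ConvexOn ℝ univ (fun x => L / 2 * ‖x‖ ^ 2 - f x)) (x y : E) :
    f y + ⟪gradient f y, x - y⟫ + 1 / (2 * L) * ‖gradient f x - gradient f y‖ ^ 2 ≤ f x := by
  set g := gradient f x - gradient f y with hgdef
  set z := x - L⁻¹ • g with hzdef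
  have h1 := hlow y z
  have h2 := upper_bound f L hf hcL x z
  have hzx : z - x = -(L⁻¹ • g) := by rw [hzdef]; abel
  have hzy : z - y = (x - y) - L⁻¹ • g := by rw [hzdef]; abel
  have e1 : ⟪gradient f x, z - x⟫ = -(L⁻¹ * ⟪gradient f x, g⟫) := by
    rw [hzx, inner_neg_right, real_inner_smul_right]
  have e2 : ‖z - x‖ ^ 2 = L⁻¹ ^ 2 * ‖g‖ ^ 2 := by
    rw [hzx, norm_neg, norm_smul]
    simp [abs_of_pos (inv_pos.mpr hL), mul_pow]
  have e3 : ⟪gradient f y, z - y⟫ = ⟪gradient f y, x - y⟫ - L⁻¹ * ⟪gradient f y, g⟫ := by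
    rw [hzy, inner_sub_right, real_inner_smul_right]
  have e4 : ⟪gradient f x, g⟫ - ⟪gradient f y, g⟫ = ‖g‖ ^ 2 := by
    rw [← inner_sub_left, ← hgdef, real_inner_self_eq_norm_sq]
  rw [e3] at h1
  rw [e1, e2] at h2
  have hL' : L ≠ 0 := ne_of_gt hL
  have : f y + ⟪gradient f y, x - y⟫ - L⁻¹ * ⟪gradient f y, g⟫ ≤
      f x - L⁻¹ * ⟪gradient f x, g⟫ + L / 2 * (L⁻¹ ^ 2 * ‖g‖ ^ 2) := by linarith
  have hfin : L / 2 * (L⁻¹ ^ 2 * ‖g‖ ^ 2) = 1 / (2 * L) * ‖g‖ ^ 2 := by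
    field_simp
  have e5 : L⁻¹ * ⟪gradient f x, g⟫ - L⁻¹ * ⟪gradient f y, g⟫ = L⁻¹ * ‖g‖ ^ 2 := by
    rw [← mul_sub, e4]
  have heq : L⁻¹ * ‖g‖ ^ 2 = 2 * (1 / (2 * L) * ‖g‖ ^ 2) := by
    field_simp
  rw [hfin] at this
  linarith [this, e5, heq]
end aux2

theorem stmt_13 {d : ℕ} (f₁ f₂ : EuclideanSpace ℝ (Fin d) → ℝ) (μ₁ L₁ μ₂ L₂ : ℝ)
    (hf₁ : Differentiable ℝ f₁) (hf₂ : Differentiable ℝ f₂)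
    (hμ₂₁ : μ₂ ≥ μ₁) (hμ₁ : μ₁ ≥ 0)
    (hL₁pos : 0 < L₁) (hL₁μ₂ : L₁ ≤ μ₂) (hμ₂L₂ : μ₂ < L₂) (h₁ : μ₁ < L₁)
    (hcL₁ : ConvexOn ℝ univ (fun x => L₁ / 2 * ‖x‖ ^ 2 - f₁ x))
    (hcμ₁ : ConvexOn ℝ univ (fun x => f₁ x - μ₁ / 2 * ‖x‖ ^ 2))
    (hcL₂ : ConvexOn ℝ univ (fun x => L₂ / 2 * ‖x‖ ^ 2 - f₂ x))
    (hcμ₂ : ConvexOn ℝ univ (fun x => f₂ x - μ₂ / 2 * ‖x‖ ^ 2))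
    (x₀ x₁ x₂ : EuclideanSpace ℝ (Fin d))
    (hDCA₀ : gradient f₁ x₁ = gradient f₂ x₀)
    (hDCA₁ : gradient f₁ x₂ = gradient f₂ x₁) :
    (f₁ x₁ - f₂ x₁) - (f₁ x₂ - f₂ x₂) ≥
      μ₂ ^ 2 * (L₁ + μ₂) / L₁ ^ 2 * (1 / 2) * ‖x₀ - x₁‖ ^ 2 := by
  have hμ₂pos : 0 < μ₂ := lt_of_lt_of_le hL₁pos hL₁μ₂
  have hlow₁ : ∀ a b : EuclideanSpace ℝ (Fin d),
      f₁ a + ⟪gradient f₁ a, b - a⟫ ≤ f₁ b := by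
    intro a b
    have h := lower_bound f₁ μ₁ hf₁ hcμ₁ a b
    have h0 : 0 ≤ μ₁ / 2 * ‖b - a‖ ^ 2 := by positivity
    linarith
  have key1 := interp f₁ L₁ hL₁pos hf₁ hlow₁ hcL₁ x₁ x₂
  have key1' := interp f₁ L₁ hL₁pos hf₁ hlow₁ hcL₁ x₂ x₁
  have key2 := lower_bound f₂ μ₂ hf₂ hcμ₂ x₁ x₂
  have mono1 := lower_bound f₂ μ₂ hf₂ hcμ₂ x₀ x₁
  have mono2 := lower_bound f₂ μ₂ hf₂ hcμ₂ x₁ x₀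
  set G : EuclideanSpace ℝ (Fin d) := gradient f₁ x₁ - gradient f₁ x₂ with hGdef
  set A : ℝ := ‖G‖ with hAdef
  set m : ℝ := ‖x₁ - x₂‖ with hmdef
  set n : ℝ := ‖x₀ - x₁‖ with hndef
  have hA0 : 0 ≤ A := norm_nonneg _
  have hm0 : 0 ≤ m := norm_nonneg _
  have hn0 : 0 ≤ n := norm_nonneg _
  have hrev1 : ‖gradient f₁ x₂ - gradient f₁ x₁‖ = A := by rw [hAdef, hGdef, norm_sub_rev]
  have hrev2 : ‖x₂ - x₁‖ = m := by rw [hmdef, norm_sub_rev]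
  have hrev3 : ‖x₁ - x₀‖ = n := by rw [hndef, norm_sub_rev]
  rw [hrev1] at key1'
  rw [hrev2] at key2
  rw [hrev3] at mono1
  -- descent inequality
  have hc0 : ⟪gradient f₂ x₁, x₂ - x₁⟫ = -⟪gradient f₁ x₂, x₁ - x₂⟫ := by
    rw [← hDCA₁, show x₂ - x₁ = -(x₁ - x₂) from by abel, inner_neg_right]
  have hdesc : (f₁ x₁ - f₂ x₁) - (f₁ x₂ - f₂ x₂) ≥ 1 / (2 * L₁) * A ^ 2 + μ₂ / 2 * m ^ 2 := by
    rw [hc0] at key2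
    linarith
  -- cocoercivity
  have hi1 : ⟪gradient f₁ x₁, x₂ - x₁⟫ = -⟪gradient f₁ x₁, x₁ - x₂⟫ := by
    rw [show x₂ - x₁ = -(x₁ - x₂) from by abel, inner_neg_right]
  have hGi : ⟪G, x₁ - x₂⟫ = ⟪gradient f₁ x₁, x₁ - x₂⟫ - ⟪gradient f₁ x₂, x₁ - x₂⟫ := by
    rw [hGdef, inner_sub_left]
  have h2L : 1 / L₁ * A ^ 2 = 2 * (1 / (2 * L₁) * A ^ 2) := by field_simp
  have hcs1 := real_inner_le_norm G (x₁ - x₂)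
  have hcoco : A * m ≥ 1 / L₁ * A ^ 2 := by
    rw [hi1] at key1'
    linarith
  -- strong monotonicity of f₂
  have hGeq : gradient f₂ x₀ - gradient f₂ x₁ = G := by rw [hGdef, ← hDCA₀, ← hDCA₁]
  have hi2 : ⟪gradient f₂ x₀, x₁ - x₀⟫ = -⟪gradient f₂ x₀, x₀ - x₁⟫ := by
    rw [show x₁ - x₀ = -(x₀ - x₁) from by abel, inner_neg_right]
  have hGi2 : ⟪G, x₀ - x₁⟫ = ⟪gradient f₂ x₀, x₀ - x₁⟫ - ⟪gradient f₂ x₁, x₀ - x₁⟫ := by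
    rw [← hGeq, inner_sub_left]
  have hcs2 := real_inner_le_norm G (x₀ - x₁)
  have hmono : A * n ≥ μ₂ * n ^ 2 := by
    rw [hi2] at mono1
    linarith
  -- final arithmetic
  clear_value A m n
  clear key1 key1' key2 mono1 mono2 hc0 hi1 hGi hcs1 hi2 hGi2 hcs2 hGeq hrev1 hrev2 hrev3 h2L
  clear hcL₁ hcμ₁ hcL₂ hcμ₂ hf₁ hf₂ hlow₁ hDCA₀ hDCA₁ hGdef hAdef hmdef hndef
  rcases eq_or_lt_of_le hn0 with hn | hn
  · have h01 : 0 ≤ 1 / (2 * L₁) * A ^ 2 := by positivity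
    have h02 : 0 ≤ μ₂ / 2 * m ^ 2 := by
      apply mul_nonneg (by linarith) (sq_nonneg m)
    rw [← hn]
    have : μ₂ ^ 2 * (L₁ + μ₂) / L₁ ^ 2 * (1 / 2) * (0:ℝ) ^ 2 = 0 := by ring
    rw [this]
    linarith
  · have hA : μ₂ * n ≤ A := by nlinarith [hmono, hn]
    have hApos : 0 < A := lt_of_lt_of_le (mul_pos hμ₂pos hn) hA
    have hcoco' : L₁ * (A * m) ≥ A ^ 2 := by
      have h := mul_le_mul_of_nonneg_left hcoco hL₁pos.le
      rw [show L₁ * (1 / L₁ * A ^ 2) = A ^ 2 from by field_simp] at h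
      linarith
    have hLm : A ≤ L₁ * m := by nlinarith [hcoco', hApos]
    have hA2 : A ^ 2 ≥ μ₂ ^ 2 * n ^ 2 := by nlinarith [hA, mul_pos hμ₂pos hn]
    have hm2 : m ^ 2 ≥ μ₂ ^ 2 * n ^ 2 / L₁ ^ 2 := by
      have h1 : (L₁ * m) ^ 2 ≥ (μ₂ * n) ^ 2 := by nlinarith [hLm, hA, mul_pos hμ₂pos hn]
      rw [ge_iff_le, div_le_iff₀ (by positivity : (0:ℝ) < L₁ ^ 2)]
      linarith [h1]
    have t1 := mul_le_mul_of_nonneg_left hA2 (by positivity : (0:ℝ) ≤ 1 / (2 * L₁))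
    have t2 := mul_le_mul_of_nonneg_left hm2 (by positivity : (0:ℝ) ≤ μ₂ / 2)
    have e : μ₂ ^ 2 * (L₁ + μ₂) / L₁ ^ 2 * (1 / 2) * n ^ 2
        = 1 / (2 * L₁) * (μ₂ ^ 2 * n ^ 2) + μ₂ / 2 * (μ₂ ^ 2 * n ^ 2 / L₁ ^ 2) := by
      field_simp
    rw [e]
    linarith
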